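/- Let α and β be the two roots in ℂ of the polynomial x² − (1+i)x + 1. The four vectors v_k := (α^k, (conj β)^k) ∈ ℂ², for k = 0, 1, 2, 3, are linearly independent over ℝ and span ℂ² as a real vector space; i.e. (v₀, v₁, v₂, v₃) is an ℝ-basis of ℂ² viewed as a 4-dimensional real vector space. (Hence their ℤ-span Γ is a full lattice in ℂ², so that ℂ²/Γ is a complex 2-torus.) -/

import Mathlib

open Complex

/-- If `α` and `β` are the two roots of `x² − (1+i)x + 1`, then the four vectors
`v_k = (α^k, (conj β)^k)`, `k = 0,…,3`, are linearly independent over `ℝ` and span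
`ℂ²` as a real vector space, i.e. they form an `ℝ`-basis of `ℂ²`. -/
theorem lattice_vectors_real_basis (α β : ℂ)
    (hα : α ^ 2 - (1 + I) * α + 1 = 0)
    (hsum : α + β = 1 + I) (hprod : α * β = 1) :
    LinearIndependent ℝ
      (fun k : Fin 4 => ((α ^ (k : ℕ), (starRingEnd ℂ) β ^ (k : ℕ)) : ℂ × ℂ)) ∧
    Submodule.span ℝ
      (Set.range fun k : Fin 4 => ((α ^ (k : ℕ), (starRingEnd ℂ) β ^ (k : ℕ)) : ℂ × ℂ)) =
      ⊤ := by
  have hβ : β = 1 + I - α := by linear_combination hsum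
  set a := α.re with ha
  set b := α.im with hb
  have he : α * (1 + I - α) = 1 := by rw [← hβ]; exact hprod
  have hre : a - b - (a ^ 2 - b ^ 2) = 1 := by
    have := congrArg Complex.re he
    simp [Complex.mul_re, Complex.sub_re, Complex.add_re, Complex.sub_im, Complex.add_im] at this
    ring_nf at this ⊢
    linarith
  have him : a + b - 2 * a * b = 0 := by
    have := congrArg Complex.im he
    simp [Complex.mul_im, Complex.sub_re, Complex.add_re, Complex.sub_im, Complex.add_im] at this
    ring_nf at this ⊢
    linarith
  have hb0 : b ≠ 0 := by intro h; rw [h] at him hre; nlinarith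
  have hb1 : b ≠ 1 := by intro h; rw [h] at him hre; nlinarith
  have hβre : β.re = 1 - a := by rw [hβ]; simp [ha]
  have hβim : β.im = 1 - b := by rw [hβ]; simp [hb]
  set x : Fin 4 → ℂ := ![α, (starRingEnd ℂ) α, β, (starRingEnd ℂ) β] with hx
  have hinj : Function.Injective x := by
    intro i j h
    fin_cases i <;> fin_cases j <;> simp only [hx] at h ⊢ <;>
      first
      | rfl
      | (exfalso
         rw [Complex.ext_iff] at h
         simp [Complex.conj_re, Complex.conj_im, hβre, hβim] at h
         all_goals first
         | (obtain ⟨h1, h2⟩ := h; nlinarith)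
         | nlinarith
         | (apply hb0; linarith)
         | (apply hb1; linarith))
  have hdet : (Matrix.vandermonde x).det ≠ 0 := Matrix.det_vandermonde_ne_zero_iff.mpr hinj
  have hLI : LinearIndependent ℝ
      (fun k : Fin 4 => ((α ^ (k : ℕ), (starRingEnd ℂ) β ^ (k : ℕ)) : ℂ × ℂ)) := by
    rw [Fintype.linearIndependent_iff]
    intro g hg
    have h1 : ∑ i : Fin 4, (g i : ℂ) * α ^ (i : ℕ) = 0 := by
      have := congrArg Prod.fst hg
      simpa [Prod.fst_sum, Complex.real_smul] using this
    have h2 : ∑ i : Fin 4, (g i : ℂ) * (starRingEnd ℂ) β ^ (i : ℕ) = 0 := by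
      have := congrArg Prod.snd hg
      simpa [Prod.snd_sum, Complex.real_smul] using this
    have h3 : ∑ i : Fin 4, (g i : ℂ) * (starRingEnd ℂ) α ^ (i : ℕ) = 0 := by
      have := congrArg (starRingEnd ℂ) h1
      simpa [map_sum, map_mul, map_pow, Complex.conj_ofReal] using this
    have h4 : ∑ i : Fin 4, (g i : ℂ) * β ^ (i : ℕ) = 0 := by
      have := congrArg (starRingEnd ℂ) h2
      simpa [map_sum, map_mul, map_pow, Complex.conj_ofReal] using this
    have hmv : (Matrix.vandermonde x).mulVec (fun i => (g i : ℂ)) = 0 := by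
      funext r
      have key : ∀ z : ℂ, ∑ i : Fin 4, (g i : ℂ) * z ^ (i : ℕ) = 0 →
          ∑ j : Fin 4, z ^ (j : ℕ) * (g j : ℂ) = 0 := by
        intro z hz
        rw [← hz]; exact Finset.sum_congr rfl fun j _ => mul_comm _ _
      fin_cases r <;>
        simp only [Matrix.mulVec, Matrix.vandermonde, dotProduct, Matrix.of_apply, hx,
          Matrix.cons_val_zero, Matrix.cons_val_one, Matrix.head_cons, Pi.zero_apply,
          Matrix.cons_val_two, Matrix.cons_val_three, Matrix.tail_cons] <;>
        [exact key α h1; exact key _ h3; exact key β h4; exact key _ h2]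
    have hc : (fun i => (g i : ℂ)) = 0 := Matrix.eq_zero_of_mulVec_eq_zero hdet hmv
    intro i
    simpa using congrFun hc i
  refine ⟨hLI, ?_⟩
  apply hLI.span_eq_top_of_card_eq_finrank
  simp [Module.finrank_prod, Complex.finrank_real_complex]
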